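/- Under the hypotheses of the context (the absorption probabilities s_k,…,s_n of the Markov chain M_k^2), if in addition k ≤ n/2, then s_k ≥ 1 − 256r/((r−5)(r−1)·n). -/

import Mathlib

private lemma step_identity (n k i : ℕ) (r : ℝ) (hr : 0 < r) (hn : 0 < n)
    (hi1 : k + 1 ≤ i) (hi2 : i ≤ n) (s : ℕ → ℝ)
    (hrec_i : s i = (r * i * ((n : ℝ) - i) / n * s (i + 1)
              + ((((i : ℝ) - k) * n + i * ((n : ℝ) - i)) / n) * s (i - 1)
              + r * ((i : ℝ) - k) / n)
        / (r * i * ((n : ℝ) - i) / n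
              + (((i : ℝ) - k) * n + i * ((n : ℝ) - i)) / n
              + r * ((i : ℝ) - k) / n)) :
    ((((i : ℝ) - k) * n + i * ((n : ℝ) - i)) / n) * (s i - s (i - 1))
      = (r * ((i : ℝ) - k) / n) * (1 - s i)
        + (r * i * ((n : ℝ) - i) / n) * (s (i + 1) - s i) := by
  have hkR : (k : ℝ) + 1 ≤ i := by exact_mod_cast hi1
  have hiR : (i : ℝ) ≤ n := by exact_mod_cast hi2
  have hnR : (0 : ℝ) < n := by exact_mod_cast hn
  have hi0 : (0 : ℝ) ≤ i := Nat.cast_nonneg i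
  have hk0 : (0 : ℝ) ≤ k := Nat.cast_nonneg k
  have hD : (r * i * ((n : ℝ) - i) / n
      + (((i : ℝ) - k) * n + i * ((n : ℝ) - i)) / n
      + r * ((i : ℝ) - k) / n) ≠ 0 := by
    have hA : 0 ≤ r * i * ((n : ℝ) - i) / n := by
      apply div_nonneg _ hnR.le
      apply mul_nonneg (by positivity)
      linarith
    have hB : 0 < (((i : ℝ) - k) * n + i * ((n : ℝ) - i)) / n := by
      apply div_pos _ hnR
      nlinarith [mul_nonneg hi0 (by linarith : (0:ℝ) ≤ (n:ℝ) - i)]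
    have hC : 0 < r * ((i : ℝ) - k) / n := by
      apply div_pos _ hnR
      nlinarith
    positivity
  have heq := hrec_i
  rw [eq_div_iff hD] at heq
  linear_combination heq

set_option maxHeartbeats 1600000 in
/-- If moreover `k ≤ n/2`, then `s_k ≥ 1 - 256r/((r-5)(r-1)·n)` for the absorption
probabilities of the Markov chain `M_k^2`. -/
theorem sk_lower_bound_half (n k : ℕ) (hn : 2 ≤ n) (hk1 : 1 ≤ k) (hk2 : k ≤ n - 1)
    (r : ℝ) (hr : 5 < r) (s : ℕ → ℝ)
    (hbound : ∀ i, k ≤ i → i ≤ n + 1 → 0 ≤ s i ∧ s i ≤ 1)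
    (htop : s (n + 1) = 1)
    (hmono : ∀ i, k ≤ i → i < n → s i ≤ s (i + 1))
    (hfirst : s k ≥ (1 - 2 / ((n : ℝ) * (r - 1))) * s (k + 1))
    (hrec : ∀ i, k + 1 ≤ i → i ≤ n →
      s i = (r * i * ((n : ℝ) - i) / n * s (i + 1)
              + ((((i : ℝ) - k) * n + i * ((n : ℝ) - i)) / n) * s (i - 1)
              + r * ((i : ℝ) - k) / n)
        / (r * i * ((n : ℝ) - i) / n
              + (((i : ℝ) - k) * n + i * ((n : ℝ) - i)) / n
              + r * ((i : ℝ) - k) / n))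
    (hhalf : (k : ℝ) ≤ (n : ℝ) / 2) :
    s k ≥ 1 - 256 * r / ((r - 5) * (r - 1) * n) := by
  have hn0 : 0 < n := by omega
  have hnR : (0 : ℝ) < n := by exact_mod_cast hn0
  have hnR2 : (2 : ℝ) ≤ n := by exact_mod_cast hn
  have hr0 : (0 : ℝ) < r := by linarith
  have hr5 : (0 : ℝ) < r - 5 := by linarith
  have hr1 : (0 : ℝ) < r - 1 := by linarith
  have hG0 : (0 : ℝ) < (n : ℝ) / r := by positivity
  have h2k : 2 * k ≤ n := by
    have : ((2 * k : ℕ) : ℝ) ≤ (n : ℝ) := by push_cast; linarith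
    exact_mod_cast this
  -- ===== first induction : 1 - s i ≤ (n/r) (s i - s (i-1)) for k+1 ≤ i ≤ n+1 =====
  have base1 : 1 - s (n + 1) ≤ ((n : ℝ) / r) * (s (n + 1) - s (n + 1 - 1)) := by
    simp only [Nat.add_sub_cancel]
    rw [htop]
    have hs : s n ≤ 1 := (hbound n (by omega) (by omega)).2
    nlinarith [mul_nonneg hG0.le (by linarith : (0:ℝ) ≤ 1 - s n)]
  have main1 : ∀ j i, k + 1 ≤ i → i ≤ n + 1 → n + 1 ≤ i + j →
      (1 - s i) ≤ ((n : ℝ) / r) * (s i - s (i - 1)) := by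
    intro j
    induction j with
    | zero =>
      intro i hi1 hi2 hij
      have : i = n + 1 := by omega
      subst this
      exact base1
    | succ j IH =>
      intro i hi1 hi2 hij
      rcases Nat.lt_or_ge i (n + 1) with hlt | hge
      · have hi2' : i ≤ n := by omega
        have IH' := IH (i + 1) (by omega) (by omega) (by omega)
        simp only [Nat.add_sub_cancel] at IH'
        have id1 := step_identity n k i r hr0 hn0 hi1 hi2' s (hrec i hi1 hi2')
        set G := (n : ℝ) / r with hG_def
        set A := r * i * ((n : ℝ) - i) / n with hA_def
        set B := (((i : ℝ) - k) * n + i * ((n : ℝ) - i)) / n with hB_def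
        set C := r * ((i : ℝ) - k) / n with hC_def
        have hkR : (k : ℝ) + 1 ≤ i := by exact_mod_cast hi1
        have hiR : (i : ℝ) ≤ n := by exact_mod_cast hi2'
        have hi0 : (0 : ℝ) ≤ i := Nat.cast_nonneg i
        have hA0 : 0 ≤ A := by
          rw [hA_def]; apply div_nonneg _ hnR.le
          apply mul_nonneg (by positivity); linarith
        have hB0 : 0 < B := by
          rw [hB_def]; apply div_pos _ hnR
          nlinarith [mul_nonneg hi0 (by linarith : (0:ℝ) ≤ (n:ℝ) - i)]
        have hsle : s i ≤ 1 := (hbound i (by omega) (by omega)).2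
        have ht0 : 0 ≤ 1 - s i := by linarith
        have h2 : 1 - s i ≤ (1 + G) * (s (i + 1) - s i) := by nlinarith [IH']
        have hdiff : C * G * (1 + G) + A * G - B * (1 + G)
            = ((i : ℝ) * ((n : ℝ) - i)) * (1 - 1 / n - 1 / r) := by
          rw [hA_def, hB_def, hC_def, hG_def]
          field_simp
          ring
        have hfrac : 1 / (n : ℝ) + 1 / r ≤ 1 := by
          have h1 : 1 / (n : ℝ) ≤ 1 / 2 := by
            rw [div_le_div_iff₀ hnR (by norm_num)]; linarith
          have h2 : 1 / r ≤ 1 / 5 := by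
            rw [div_le_div_iff₀ hr0 (by norm_num)]; linarith
          linarith
        have hp0 : 0 ≤ ((i : ℝ) * ((n : ℝ) - i)) * (1 - 1 / n - 1 / r) := by
          apply mul_nonneg
          · apply mul_nonneg hi0; linarith
          · linarith
        have h5 : B * (1 + G) ≤ C * G * (1 + G) + A * G := by linarith
        have fact1 := mul_le_mul_of_nonneg_right h5 ht0
        have fact2 := mul_le_mul_of_nonneg_left h2 (mul_nonneg hA0 hG0.le)
        have id2 : G * (1 + G) * (B * (s i - s (i - 1)))
            = G * (1 + G) * (C * (1 - s i) + A * (s (i + 1) - s i)) := by rw [id1]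
        have hBG : 0 < B * (1 + G) := by positivity
        have key : (B * (1 + G)) * (1 - s i) ≤ (B * (1 + G)) * (G * (s i - s (i - 1))) := by
          linarith [fact1, fact2, id2]
        exact le_of_mul_le_mul_left key hBG
      · have : i = n + 1 := by omega
        subst this
        exact base1
  by_cases hdeg : n - k ≤ 1
  -- ===== degenerate case : n = 2, k = 1 =====
  · have hnk : n = 2 ∧ k = 1 := by omega
    obtain ⟨hn2, hk1'⟩ := hnk
    subst hn2; subst hk1'
    have h1 := main1 (2 + 1) 2 (by omega) (by omega) (by omega)
    norm_num at h1
    obtain ⟨hs20, hs21⟩ := hbound 2 (by omega) (by omega)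
    push_cast at hfirst
    norm_num at hfirst
    have hfirst2 : s 1 ≥ (1 - 1 / (r - 1)) * s 2 := by
      rw [show (2:ℝ) / (2 * (r - 1)) = 1 / (r - 1) from by
        rw [div_eq_div_iff (by positivity) (by positivity)]; ring] at hfirst
      exact hfirst
    have heps' : (0:ℝ) ≤ 1 / (r - 1) := by positivity
    have hdk : s 2 - s 1 ≤ 1 / (r - 1) := by
      nlinarith [hfirst2, mul_nonneg heps' (by linarith : (0:ℝ) ≤ 1 - s 2)]
    have hd0 : (0:ℝ) ≤ s 2 - s 1 := by
      have := hmono 1 (by omega) (by omega); linarith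
    have c1 : 1 - s 1 ≤ (1 + 2 / r) * (s 2 - s 1) := by linarith [h1]
    have c2 : (1 + 2 / r) * (s 2 - s 1) ≤ (1 + 2 / r) * (1 / (r - 1)) :=
      mul_le_mul_of_nonneg_left hdk (by positivity)
    have hfin : (1 + 2 / r) * (1 / (r - 1)) ≤ 256 * r / ((r - 5) * (r - 1) * 2) := by
      rw [show (1 + 2 / r) * (1 / (r - 1)) = (r + 2) / (r * (r - 1)) from by
        field_simp]
      rw [div_le_div_iff₀ (by positivity) (by positivity)]
      nlinarith [sq_nonneg r, mul_pos hr0 hr1, mul_pos (mul_pos hr0 hr0) hr1]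
    rw [ge_iff_le]
    push_cast
    linarith [c1, c2, hfin]
  -- ===== main case : n - k ≥ 2 =====
  · have hnk2 : 2 ≤ n - k := by omega
    set m := k + (n - k + 1) / 2 with hm_def
    have hm1 : k + 1 ≤ m := by omega
    have hm2 : m ≤ n - 1 := by omega
    set G := (n : ℝ) / r with hG_def
    have hGnn : (0:ℝ) ≤ G := by rw [hG_def]; positivity
    have base2 : 1 - s (m + 1)
        ≤ (5 / (r - 5) + (1 + G) * (5 / r) ^ (m + 1 - (m + 1))) * (s (m + 1) - s (m + 1 - 1)) := by
      simp only [Nat.add_sub_cancel, Nat.sub_self, pow_zero]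
      have hmain1 := main1 (n + 1) (m + 1) (by omega) (by omega) (by omega)
      simp only [Nat.add_sub_cancel] at hmain1
      have hd0 : 0 ≤ s (m + 1) - s m := by
        have := hmono m (by omega) (by omega); linarith
      have hGH : G ≤ 5 / (r - 5) + (1 + G) * 1 := by
        have : (0:ℝ) < 5 / (r - 5) := by positivity
        linarith
      nlinarith [hmain1, mul_le_mul_of_nonneg_right hGH hd0]
    have main2 : ∀ j i, k + 1 ≤ i → i ≤ m + 1 → m + 1 ≤ i + j →
        (1 - s i) ≤ (5 / (r - 5) + (1 + G) * (5 / r) ^ (m + 1 - i)) * (s i - s (i - 1)) := by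
      intro j
      induction j with
      | zero =>
        intro i hi1 hi2 hij
        have : i = m + 1 := by omega
        subst this
        exact base2
      | succ j IH =>
        intro i hi1 hi2 hij
        rcases Nat.lt_or_ge i (m + 1) with hlt | hge
        · have hi2' : i ≤ n := by omega
          have IH' := IH (i + 1) (by omega) (by omega) (by omega)
          simp only [Nat.add_sub_cancel] at IH'
          rw [show m + 1 - (i + 1) = m - i from by omega] at IH'
          have id1 := step_identity n k i r hr0 hn0 hi1 hi2' s (hrec i hi1 hi2')
          set A := r * i * ((n : ℝ) - i) / n with hA_def
          set B := (((i : ℝ) - k) * n + i * ((n : ℝ) - i)) / n with hB_def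
          set C := r * ((i : ℝ) - k) / n with hC_def
          have hkR : (k : ℝ) + 1 ≤ i := by exact_mod_cast hi1
          have hiR1 : (i : ℝ) + 1 ≤ n := by exact_mod_cast (by omega : i + 1 ≤ n)
          have hk1R : (1 : ℝ) ≤ k := by exact_mod_cast hk1
          have h2iR : (i : ℝ) + i ≤ (n : ℝ) + k + 1 := by
            exact_mod_cast (by omega : i + i ≤ n + k + 1)
          have hi0 : (0 : ℝ) ≤ i := Nat.cast_nonneg i
          have hApos : 0 < A := by
            rw [hA_def]; apply div_pos _ hnR
            apply mul_pos (by nlinarith) (by linarith)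
          have hsle : s i ≤ 1 := (hbound i (by omega) (by omega)).2
          have ht0 : 0 ≤ 1 - s i := by linarith
          have hC0 : 0 ≤ C := by
            rw [hC_def]; apply div_nonneg _ hnR.le; nlinarith
          have hdm0 : 0 ≤ s i - s (i - 1) := by
            have := hmono (i - 1) (by omega) (by omega)
            rw [Nat.sub_add_cancel (by omega)] at this
            linarith
          have hcomb : ((i : ℝ) - k) * n ≤ 4 * ((i : ℝ) * ((n : ℝ) - i)) := by
            nlinarith [mul_nonneg (by linarith : (0:ℝ) ≤ (n:ℝ) - i + 1 - ((i:ℝ) - k)) (by linarith : (0:ℝ) ≤ (k:ℝ)),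
              mul_nonneg (by linarith : (0:ℝ) ≤ (n:ℝ) - i + 1 - ((i:ℝ) - k)) (by linarith : (0:ℝ) ≤ (i:ℝ) - k),
              mul_nonneg (by linarith : (0:ℝ) ≤ (n:ℝ) - i - 1) (by linarith : (0:ℝ) ≤ (k:ℝ)),
              mul_nonneg (by linarith : (0:ℝ) ≤ (n:ℝ) - i - 1) (by linarith : (0:ℝ) ≤ (i:ℝ) - k)]
          have hBA : B ≤ 5 / r * A := by
            rw [hA_def, hB_def]
            rw [show 5 / r * (r * i * ((n:ℝ) - i) / n) = (5 * ((i:ℝ) * ((n:ℝ) - i))) / n from by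
              field_simp]
            gcongr
            nlinarith [mul_nonneg hi0 (by linarith : (0:ℝ) ≤ (n:ℝ) - i)]
          have hdstep : s (i + 1) - s i ≤ 5 / r * (s i - s (i - 1)) := by
            have hAd : A * (s (i + 1) - s i) ≤ B * (s i - s (i - 1)) := by
              linarith [id1, mul_nonneg hC0 ht0]
            have hBdm : B * (s i - s (i - 1)) ≤ (5 / r * A) * (s i - s (i - 1)) :=
              mul_le_mul_of_nonneg_right hBA hdm0
            have hfinal : A * (s (i + 1) - s i) ≤ A * (5 / r * (s i - s (i - 1))) := by
              linarith [hAd, hBdm]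
            exact le_of_mul_le_mul_left hfinal hApos
          have hP0 : (0:ℝ) ≤ (5 / r) ^ (m - i) := by positivity
          have hH0 : (0:ℝ) ≤ 1 + (5 / (r - 5) + (1 + G) * (5 / r) ^ (m - i)) := by
            have h1 : (0:ℝ) ≤ 5 / (r - 5) := by positivity
            have h2 : (0:ℝ) ≤ (1 + G) * (5 / r) ^ (m - i) :=
              mul_nonneg (by linarith) hP0
            linarith
          have c1 : 1 - s i
              ≤ (1 + (5 / (r - 5) + (1 + G) * (5 / r) ^ (m - i))) * (s (i + 1) - s i) := by
            linarith [IH']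
          have c2 : (1 + (5 / (r - 5) + (1 + G) * (5 / r) ^ (m - i))) * (s (i + 1) - s i)
              ≤ (1 + (5 / (r - 5) + (1 + G) * (5 / r) ^ (m - i))) * (5 / r * (s i - s (i - 1))) :=
            mul_le_mul_of_nonneg_left hdstep hH0
          have heq2 : (1 + (5 / (r - 5) + (1 + G) * (5 / r) ^ (m - i))) * (5 / r * (s i - s (i - 1)))
              = (5 / (r - 5) + (1 + G) * (5 / r) ^ (m + 1 - i)) * (s i - s (i - 1)) := by
            rw [show m + 1 - i = (m - i) + 1 from by omega, pow_succ]
            set P := (5 / r) ^ (m - i) with hP_def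
            field_simp
            ring
          linarith [c1, c2, heq2]
        · have : i = m + 1 := by omega
          subst this
          exact base2
    -- ===== final assembly =====
    have h2' := main2 (m + 1) (k + 1) (le_refl _) (by omega) (by omega)
    simp only [Nat.add_sub_cancel] at h2'
    rw [show m + 1 - (k + 1) = m - k from by omega] at h2'
    have hM1 : 1 ≤ m - k := by omega
    have hM4 : n ≤ 4 * (m - k) := by omega
    have hMR : (n : ℝ) ≤ 4 * ((m - k : ℕ) : ℝ) := by exact_mod_cast hM4
    have hM1R : (1 : ℝ) ≤ ((m - k : ℕ) : ℝ) := by exact_mod_cast hM1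
    have hpow : (5 / r) ^ (m - k) ≤ 5 / (((m - k : ℕ) : ℝ) * (r - 5)) := by
      have hb := one_add_mul_le_pow (by linarith : (-2:ℝ) ≤ (r - 5) / 5) (m - k)
      rw [show (1:ℝ) + (r - 5) / 5 = r / 5 from by ring] at hb
      have hpos : (0:ℝ) < ((m - k : ℕ) : ℝ) * (r - 5) / 5 := by positivity
      rw [show (5:ℝ) / r = (r / 5)⁻¹ from by rw [inv_div], inv_pow]
      rw [show (5:ℝ) / (((m - k : ℕ) : ℝ) * (r - 5)) = (((m - k : ℕ) : ℝ) * (r - 5) / 5)⁻¹ from by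
        rw [inv_div]]
      apply inv_anti₀ hpos
      linarith
    obtain ⟨hsk10, hsk11⟩ := hbound (k + 1) (by omega) (by omega)
    have heps : (0:ℝ) ≤ 2 / ((n : ℝ) * (r - 1)) := by positivity
    have hdk : s (k + 1) - s k ≤ 2 / ((n : ℝ) * (r - 1)) := by
      linarith [hfirst, mul_nonneg heps (by linarith : (0:ℝ) ≤ 1 - s (k + 1))]
    have hH0 : (0:ℝ) ≤ 5 / (r - 5) + (1 + G) * (5 / r) ^ (m - k) := by
      have h1 : (0:ℝ) ≤ 5 / (r - 5) := by positivity
      have h2 : (0:ℝ) ≤ (1 + G) * (5 / r) ^ (m - k) := mul_nonneg (by linarith) (by positivity)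
      linarith
    have hd0 : 0 ≤ s (k + 1) - s k := by
      have := hmono k (by omega) (by omega); linarith
    have c1 : 1 - s k ≤ (1 + (5 / (r - 5) + (1 + G) * (5 / r) ^ (m - k))) * (s (k + 1) - s k) := by
      linarith [h2']
    have c2 : (1 + (5 / (r - 5) + (1 + G) * (5 / r) ^ (m - k))) * (s (k + 1) - s k)
        ≤ (1 + (5 / (r - 5) + (1 + G) * (5 / r) ^ (m - k))) * (2 / ((n : ℝ) * (r - 1))) :=
      mul_le_mul_of_nonneg_left hdk (by linarith)
    have hHb : 1 + (5 / (r - 5) + (1 + G) * (5 / r) ^ (m - k)) ≤ 128 * r / (r - 5) := by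
      have e0 : (1 + G) * (5 / r) ^ (m - k) ≤ (1 + G) * (5 / (((m - k : ℕ) : ℝ) * (r - 5))) :=
        mul_le_mul_of_nonneg_left hpow (by linarith)
      have e1 : 5 / (((m - k : ℕ) : ℝ) * (r - 5)) ≤ 20 / ((n : ℝ) * (r - 5)) := by
        rw [div_le_div_iff₀ (by positivity) (by positivity)]
        nlinarith [hMR, hr5]
      have e3 : (1 + G) * (5 / (((m - k : ℕ) : ℝ) * (r - 5))) ≤ (1 + G) * (20 / ((n : ℝ) * (r - 5))) :=
        mul_le_mul_of_nonneg_left e1 (by linarith)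
      have e2 : (1 + G) * (20 / ((n : ℝ) * (r - 5))) = 20 / ((n : ℝ) * (r - 5)) + 20 / (r * (r - 5)) := by
        rw [hG_def]; field_simp
      have e4 : 20 / ((n : ℝ) * (r - 5)) ≤ 10 / (r - 5) := by
        rw [div_le_div_iff₀ (by positivity) hr5]; nlinarith
      have e5 : 20 / (r * (r - 5)) ≤ 4 / (r - 5) := by
        rw [div_le_div_iff₀ (by positivity) hr5]; nlinarith
      have e6 : 1 + 5 / (r - 5) + 10 / (r - 5) + 4 / (r - 5) ≤ 128 * r / (r - 5) := by
        rw [show (1:ℝ) + 5 / (r - 5) + 10 / (r - 5) + 4 / (r - 5) = (r - 5 + 19) / (r - 5) from by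
          field_simp; ring]
        rw [div_le_div_iff₀ hr5 hr5]; nlinarith
      linarith
    have c3 : (1 + (5 / (r - 5) + (1 + G) * (5 / r) ^ (m - k))) * (2 / ((n : ℝ) * (r - 1)))
        ≤ (128 * r / (r - 5)) * (2 / ((n : ℝ) * (r - 1))) :=
      mul_le_mul_of_nonneg_right hHb (by positivity)
    have c4 : (128 * r / (r - 5)) * (2 / ((n : ℝ) * (r - 1))) = 256 * r / ((r - 5) * (r - 1) * n) := by
      field_simp; ring
    rw [ge_iff_le]
    linarith [c1, c2, c3, c4]
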